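/- Let G be a balanced bipartite graph with parts X, Y and S ⊆ X. Let C be a feasible cycle that is a minimal system of G (no shorter feasible cycle exists in G), with |C| ≥ 6. If x ∈ S \ V(C) and y ∈ Y \ V(C) are adjacent, then the number of edges from {x, y} to C is at most |C|/2. -/

import Mathlib

open SimpleGraph

section Aux
variable {V : Type*} {G : SimpleGraph V}

/-- Walk along a "periodic path function". -/
def arcWalk (G : SimpleGraph V) (F : ℕ → V) (h : ∀ r, G.Adj (F r) (F (r+1))) :
    (i m : ℕ) → G.Walk (F i) (F (i + m))
  | _, 0 => SimpleGraph.Walk.nil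
  | i, m+1 => (arcWalk G F h i m).concat (h (i+m))

@[simp] lemma arcWalk_length (F : ℕ → V) (h : ∀ r, G.Adj (F r) (F (r+1))) (i m : ℕ) :
    (arcWalk G F h i m).length = m := by
  induction m with
  | zero => rfl
  | succ m ih => simp [arcWalk, ih]

lemma arcWalk_support (F : ℕ → V) (h : ∀ r, G.Adj (F r) (F (r+1))) (i m : ℕ) :
    (arcWalk G F h i m).support = (List.range (m+1)).map (fun r => F (i + r)) := by
  induction m with
  | zero => simp [arcWalk, List.range_succ]
  | succ m ih =>
    simp only [arcWalk, SimpleGraph.Walk.support_concat, ih, List.range_succ (n := m+1)]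
    simp

lemma mem_arcWalk_support (F : ℕ → V) (h : ∀ r, G.Adj (F r) (F (r+1))) (i m : ℕ) (u : V) :
    u ∈ (arcWalk G F h i m).support ↔ ∃ r ≤ m, F (i + r) = u := by
  simp [arcWalk_support, List.mem_range, Nat.lt_succ_iff]

/-- getVert agrees with indexing into the support list. -/
lemma getVert_eq_support_getElem {u v : V} (p : G.Walk u v) (i : ℕ) (hi : i ≤ p.length) :
    p.getVert i = p.support[i]'(by simp [SimpleGraph.Walk.length_support]; omega) := by
  induction p generalizing i with
  | nil => simp at hi; subst hi; simp
  | cons h q ih =>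
    cases i with
    | zero => simp
    | succ i =>
      simp only [SimpleGraph.Walk.length_cons] at hi
      simp only [SimpleGraph.Walk.getVert_cons_succ, SimpleGraph.Walk.support_cons]
      rw [ih i (by omega)]
      simp

lemma IsCycle.getVert_inj {v : V} {c : G.Walk v v} (hc : c.IsCycle)
    {i j : ℕ} (hi : i < c.length) (hj : j < c.length) (hij : c.getVert i = c.getVert j) :
    i = j := by
  have hnd := hc.support_nodup
  have hlen : c.support.length = c.length + 1 := by simp [SimpleGraph.Walk.length_support]
  have htail : ∀ r : ℕ, (hr : r ≤ c.length) → 1 ≤ r → c.getVert r = c.support.tail[r-1]'(by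
      simp [List.length_tail, hlen]; omega) := by
    intro r hr h1
    rw [getVert_eq_support_getElem c r hr]
    rw [List.getElem_tail]
    congr 1
    omega
  have key : ∀ r s : ℕ, 1 ≤ r → r ≤ c.length → 1 ≤ s → s ≤ c.length →
      c.getVert r = c.getVert s → r = s := by
    intro r s h1 h2 h3 h4 heq
    rw [htail r h2 h1, htail s h4 h3] at heq
    have := (List.Nodup.getElem_inj_iff hnd).mp heq
    omega
  have h0 : c.getVert 0 = c.getVert c.length := by simp
  by_cases hi0 : i = 0
  · by_cases hj0 : j = 0
    · omega
    · have := key c.length j (by omega) le_rfl (by omega) (by omega)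
        (by rw [← h0, ← hi0]; exact hij)
      omega
  · by_cases hj0 : j = 0
    · have := key i c.length (by omega) (by omega) (by omega) le_rfl
        (by rw [← h0, ← hj0]; exact hij)
      omega
    · exact key i j (by omega) (by omega) (by omega) (by omega) hij

end Aux
section Core
variable {n : ℕ} [NeZero n]

lemma zmod_cast_val (a : ZMod n) : ((a.val : ZMod n)) = a := ZMod.natCast_rightInverse a

omit [NeZero n] in
lemma zmod_val_pos {a : ZMod n} (h : a ≠ 0) : 0 < a.val := by
  rcases Nat.eq_zero_or_pos a.val with h0 | h1
  · exact absurd ((ZMod.val_eq_zero a).mp h0) h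
  · exact h1

lemma zmod_sub_val_add {a b : ZMod n} (h : a ≠ b) : (a - b).val + (b - a).val = n := by
  have hab : a - b ≠ 0 := sub_ne_zero_of_ne h
  have h1 : b - a = -(a - b) := by ring
  rw [h1, ZMod.neg_val, if_neg hab]
  have := zmod_val_pos hab
  have := ZMod.val_lt (a - b)
  omega

lemma zmod_eq_add_val (a b : ZMod n) : b = a + ((b - a).val : ℕ) := by
  rw [zmod_cast_val]; ring

lemma zmod_sub_val_sub {a b t : ZMod n} (h : (b - a).val < (t - a).val) :
    (t - b).val = (t - a).val - (b - a).val := by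
  have h1 : t - b = (t - a) - (b - a) := by ring
  have h2 : t - b = ((((t - a).val - (b - a).val : ℕ)) : ZMod n) := by
    rw [Nat.cast_sub (le_of_lt h)]
    rw [zmod_cast_val, zmod_cast_val, h1]
  rw [h2, ZMod.val_natCast_of_lt]
  have := ZMod.val_lt (t - a)
  omega

variable {SX : ZMod n → Prop}

lemma sx_add (halt : ∀ i : ZMod n, SX (i+1) ↔ ¬ SX i) : ∀ (r : ℕ) (i : ZMod n), SX (i + r) ↔ (Even r ↔ SX i) := by
  intro r
  induction r with
  | zero => intro i; simp
  | succ r ih =>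
    intro i
    have h1 : (i + ((r+1 : ℕ) : ZMod n)) = (i + r) + 1 := by push_cast; ring
    rw [h1, halt, ih i, Nat.even_add_one]
    tauto

lemma sx_even (halt : ∀ i : ZMod n, SX (i+1) ↔ ¬ SX i) : Even n := by
  have := sx_add halt n 0
  rw [ZMod.natCast_self, add_zero] at this
  by_cases h : SX 0 <;> tauto

lemma sx_diff (halt : ∀ i : ZMod n, SX (i+1) ↔ ¬ SX i) {a b : ZMod n} : Even ((b - a).val) ↔ (SX b ↔ SX a) := by
  have h1 := sx_add halt ((b - a).val) a
  rw [← zmod_eq_add_val] at h1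
  tauto

end Core
section Core2
variable {n : ℕ}

lemma core_lemma [NeZero n] (hn6 : 6 ≤ n)
    (SX : ZMod n → Prop) (A B T : Finset (ZMod n))
    (halt : ∀ i : ZMod n, SX (i+1) ↔ ¬ SX i)
    (hA : ∀ i ∈ A, ¬ SX i) (hB : ∀ j ∈ B, SX j) (hTs : ∀ t ∈ T, SX t)
    (hTcard : 2 ≤ T.card)
    (hP3 : ∀ i ∈ A, ∀ j ∈ A, i ≠ j → ∀ t ∈ T, (t - i).val ≤ (j - i).val → n ≤ (j - i).val + 2)
    (hP5 : ∀ i ∈ A, ∀ j ∈ B, ∀ t ∈ T, (t - j).val ≤ (i - j).val → n ≤ (i - j).val + 3)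
    (hP5' : ∀ i ∈ A, ∀ j ∈ B, ∀ t ∈ T, (t - i).val ≤ (j - i).val → n ≤ (j - i).val + 3) :
    A.card + B.card ≤ n / 2 := by
  obtain ⟨n2, hn2⟩ := sx_even halt
  have hnval : ∀ k : ℕ, k < n → ((k : ℕ) : ZMod n).val = k := fun k hk => ZMod.val_natCast_of_lt hk
  have hne0 : ∀ k : ℕ, 0 < k → k < n → ((k : ℕ) : ZMod n) ≠ 0 := by
    intro k h1 h2 h
    rw [ZMod.natCast_eq_zero_iff] at h
    have := Nat.le_of_dvd h1 h
    omega
  have hcastn : ∀ k : ℕ, k ≤ n → (((n - k : ℕ)) : ZMod n) = -(k : ZMod n) := by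
    intro k hk
    rw [Nat.cast_sub hk, ZMod.natCast_self]
    ring
  obtain ⟨t1, ht1, t2, ht2, ht12⟩ := Finset.one_lt_card.mp (by omega : 1 < T.card)
  -- dichotomy
  have dicho : ∀ (d : ℕ) (i j : ZMod n), i ≠ j →
      (∀ t ∈ T, (t - i).val ≤ (j - i).val → n ≤ (j - i).val + d) →
      (∀ t ∈ T, (t - j).val ≤ (i - j).val → n ≤ (i - j).val + d) →
      (j - i).val ≤ d ∨ n - d ≤ (j - i).val := by
    intro d i j hij h1 h2
    by_cases hr : (t1 - i).val ≤ (j - i).val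
    · right
      have := h1 t1 ht1 hr
      omega
    · left
      push_neg at hr
      have hsub := zmod_sub_val_sub hr
      have hsum := zmod_sub_val_add (a := i) (b := j) hij
      have hlt := ZMod.val_lt (t1 - i)
      have hle : (t1 - j).val ≤ (i - j).val := by omega
      have := h2 t1 ht1 hle
      omega
  have hodd : ∀ i ∈ A, ∀ t : ZMod n, SX t → ¬ Even ((t - i).val) := by
    intro i hi t ht hev
    have := (sx_diff halt (a := i) (b := t)).mp hev
    exact hA i hi (this.mp ht)
  have hoddB : ∀ i ∈ A, ∀ j ∈ B, ¬ Even ((j - i).val) := fun i hi j hj => hodd i hi j (hB j hj)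
  have hAne : ∀ i ∈ A, ∀ t : ZMod n, SX t → i ≠ t := by
    intro i hi t ht h
    subst h
    exact hA i hi ht
  -- structure of pairs in A
  have hApair : ∀ i ∈ A, ∀ j ∈ A, i ≠ j → j = i + 2 ∨ i = j + 2 := by
    intro i hi j hj hij
    have hd := dicho 2 i j hij (hP3 i hi j hj hij) (hP3 j hj i hi hij.symm)
    have hev : Even ((j - i).val) := by
      rw [sx_diff halt]
      constructor <;> intro h <;> [exact absurd h (hA j hj); exact absurd h (hA i hi)]
    have hpos : 0 < (j - i).val := zmod_val_pos (sub_ne_zero_of_ne (Ne.symm hij))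
    have hlt : (j - i).val < n := ZMod.val_lt _
    obtain ⟨e, he⟩ := hev
    have : (j - i).val = 2 ∨ (j - i).val = n - 2 := by omega
    rcases this with h | h
    · left
      have := zmod_eq_add_val i j
      rw [h] at this
      rw [this]; norm_num
    · right
      have := zmod_eq_add_val i j
      rw [h, hcastn 2 (by omega)] at this
      rw [this]; push_cast; ring
  -- structure of A-B pairs
  have hAB : ∀ i ∈ A, ∀ j ∈ B, j = i + 1 ∨ j = i + 3 ∨ j = i - 3 ∨ j = i - 1 := by
    intro i hi j hj
    have hij : i ≠ j := hAne i hi j (hB j hj)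
    have hd := dicho 3 i j hij (hP5' i hi j hj) (hP5 i hi j hj)
    have hnev := hoddB i hi j hj
    have hpos : 0 < (j - i).val := zmod_val_pos (sub_ne_zero_of_ne (Ne.symm hij))
    have hlt : (j - i).val < n := ZMod.val_lt _
    have heq := zmod_eq_add_val i j
    have : (j - i).val = 1 ∨ (j - i).val = 3 ∨ (j - i).val = n - 3 ∨ (j - i).val = n - 1 := by
      rcases Nat.even_or_odd ((j-i).val) with h | h
      · exact absurd h hnev
      · obtain ⟨e, he⟩ := h; omega
    rcases this with h | h | h | h
    · left; rw [h] at heq; rw [heq]; norm_num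
    · right; left; rw [h] at heq; rw [heq]; norm_num
    · right; right; left
      rw [h, hcastn 3 (by omega)] at heq
      rw [heq]; push_cast; ring
    · right; right; right
      rw [h, hcastn 1 (by omega)] at heq
      rw [heq]; push_cast; ring
  -- G3
  have hG3 : ∀ i ∈ A, ∀ j ∈ B, j ∈ T → n = 6 ∧ j = i + 3 := by
    intro i hi j hj hjT
    have hij : i ≠ j := hAne i hi j (hB j hj)
    have h1 : n ≤ (j - i).val + 3 := hP5' i hi j hj j hjT le_rfl
    have h2 : n ≤ (i - j).val + 3 := by
      apply hP5 i hi j hj j hjT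
      simp [ZMod.val_le]
    have hsum := zmod_sub_val_add (a := i) (b := j) hij
    have hpos : 0 < (j - i).val := zmod_val_pos (sub_ne_zero_of_ne (Ne.symm hij))
    have hpos2 : 0 < (i - j).val := zmod_val_pos (sub_ne_zero_of_ne hij)
    have hn : n = 6 := by omega
    refine ⟨hn, ?_⟩
    have hv : (j - i).val = 3 := by omega
    have heq := zmod_eq_add_val i j
    rw [hv] at heq
    rw [heq]; norm_num
  -- G4
  have hG4 : ∀ i ∈ A, (i + 2) ∈ A → ∀ t ∈ T, ¬ ((t - i).val ≤ 2) := by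
    intro i hi hi2 t ht hle
    have h2 : ((i+2) - i) = ((2:ℕ) : ZMod n) := by push_cast; ring
    have hij : i ≠ i + 2 := by
      intro h
      have : ((2:ℕ) : ZMod n) = 0 := by push_cast; linear_combination -h
      exact hne0 2 (by omega) (by omega) this
    have := hP3 i hi (i+2) hi2 hij t ht (by rw [h2, hnval 2 (by omega)]; omega)
    rw [h2, hnval 2 (by omega)] at this
    omega
  -- helper: small card bounds
  have card3 : ∀ a b c : ZMod n, ({a,b,c} : Finset (ZMod n)).card ≤ 3 := by
    intro a b c
    have h1 := Finset.card_insert_le a ({b,c} : Finset (ZMod n))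
    have h2 := Finset.card_insert_le b ({c} : Finset (ZMod n))
    simp only [Finset.card_singleton] at *
    omega
  have card4 : ∀ a b c d : ZMod n, ({a,b,c,d} : Finset (ZMod n)).card ≤ 4 := by
    intro a b c d
    have h1 := Finset.card_insert_le a ({b,c,d} : Finset (ZMod n))
    have h2 := Finset.card_insert_le b ({c,d} : Finset (ZMod n))
    have h3 := Finset.card_insert_le c ({d} : Finset (ZMod n))
    simp only [Finset.card_singleton] at *
    omega
  -- hexagon contradiction
  have hex : ∀ a : ZMod n, n = 6 → a ∈ A → a + 2 ∈ A → a + 4 ∈ A → False := by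
    intro a h6 ha ha2 ha4
    subst h6
    have hv := hodd a ha t1 (hTs t1 ht1)
    have hlt := ZMod.val_lt (t1 - a)
    have heq := zmod_eq_add_val a t1
    have h1 := hG4 a ha ha2 t1 ht1
    have ha4' : (a + 2) + 2 ∈ A := by
      have : (a + 2) + 2 = a + 4 := by ring
      rw [this]; exact ha4
    have ha0' : (a + 4) + 2 ∈ A := by
      have : (a + 4) + 2 = a := by
        have h60 : ((6:ℕ) : ZMod 6) = 0 := by decide
        push_cast at h60 ⊢
        linear_combination h60
      rw [this]; exact ha
    have h2 := hG4 (a+2) ha2 ha4' t1 ht1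
    have h3 := hG4 (a+4) ha4 ha0' t1 ht1
    rw [Nat.not_even_iff] at hv
    have hv35 : (t1 - a).val = 3 ∨ (t1 - a).val = 5 := by omega
    rcases hv35 with h | h
    · apply h2
      have : t1 - (a+2) = ((1:ℕ) : ZMod 6) := by rw [heq, h]; push_cast; ring
      rw [this, hnval 1 (by omega)]
      omega
    · apply h3
      have : t1 - (a+4) = ((1:ℕ) : ZMod 6) := by rw [heq, h]; push_cast; ring
      rw [this, hnval 1 (by omega)]
      omega
  rcases (show A.card = 0 ∨ A.card = 1 ∨ A.card = 2 ∨ 3 ≤ A.card by omega) with hAc | hAc | hAc | hAc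
  · -- A empty
    rw [hAc, zero_add]
    have hdisjB : Disjoint B (B.image (· + 1)) := by
      rw [Finset.disjoint_left]
      intro b hb hmem
      obtain ⟨b', hb', hbe⟩ := Finset.mem_image.mp hmem
      exact ((halt b').mp (hbe ▸ hB b hb)) (hB b' hb')
    have hcard : (B ∪ B.image (· + 1)).card = B.card + B.card := by
      rw [Finset.card_union_of_disjoint hdisjB,
        Finset.card_image_of_injective _ (add_left_injective 1)]
    have hle : (B ∪ B.image (· + 1)).card ≤ n := by
      have := Finset.card_le_univ (B ∪ B.image (· + 1))
      simpa [ZMod.card] using this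
    omega
  · -- |A| = 1
    obtain ⟨i, hAi⟩ := Finset.card_eq_one.mp hAc
    subst hAi
    have hi : i ∈ ({i} : Finset (ZMod n)) := Finset.mem_singleton_self i
    rw [Finset.card_singleton]
    have hBsub : ∀ b ∈ B, b = i + 1 ∨ b = i + 3 ∨ b = i - 3 ∨ b = i - 1 :=
      fun b hb => hAB i hi b hb
    rcases (show n = 6 ∨ n = 8 ∨ 10 ≤ n by omega) with h6 | h8 | h10
    · subst h6
      have hTloc : ∀ t ∈ T, t = i + 1 ∨ t = i + 3 ∨ t = i + 5 := by
        intro t ht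
        have hv := hodd i hi t (hTs t ht)
        rw [Nat.not_even_iff] at hv
        have hlt := ZMod.val_lt (t - i)
        have heq := zmod_eq_add_val i t
        have hv' : (t - i).val = 1 ∨ (t - i).val = 3 ∨ (t - i).val = 5 := by omega
        rcases hv' with h | h | h
        · left; rw [h] at heq; rw [heq]; norm_num
        · right; left; rw [h] at heq; rw [heq]; norm_num
        · right; right; rw [h] at heq; rw [heq]; norm_num
      have hpick : ∃ t ∈ T, t ≠ i + 3 := by
        by_cases h : t1 = i + 3
        · exact ⟨t2, ht2, fun hh => ht12 (h.trans hh.symm)⟩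
        · exact ⟨t1, ht1, h⟩
      obtain ⟨ts, hts, htsne⟩ := hpick
      have htsB : ts ∉ B := fun h => htsne (hG3 i hi ts h hts).2
      have e3 : i - 3 = i + 3 := by
        have h60 : (6 : ZMod 6) = 0 := by decide
        linear_combination -h60
      have e5 : i - 1 = i + 5 := by
        have h60 : (6 : ZMod 6) = 0 := by decide
        linear_combination -h60
      have hts_mem : ts ∈ ({i+1, i+3, i+5} : Finset (ZMod 6)) := by
        rcases hTloc ts hts with h | h | h <;> simp [h]
      have hBsub2 : B ⊆ ({i+1, i+3, i+5} : Finset (ZMod 6)).erase ts := by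
        intro b hb
        rw [Finset.mem_erase]
        refine ⟨fun h => htsB (h ▸ hb), ?_⟩
        rcases hBsub b hb with h | h | h | h
        · simp [h]
        · simp [h]
        · rw [h, e3]; simp
        · rw [h, e5]; simp
      have hc := Finset.card_le_card hBsub2
      rw [Finset.card_erase_of_mem hts_mem] at hc
      have := card3 (i+1) (i+3) (i+5)
      omega
    · subst h8
      have hBT : ∀ b ∈ B, b ∉ T := fun b hb hbT => absurd (hG3 i hi b hb hbT).1 (by omega)
      have hTloc : ∀ t ∈ T, t = i + 1 ∨ t = i + 3 ∨ t = i + 5 ∨ t = i + 7 := by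
        intro t ht
        have hv := hodd i hi t (hTs t ht)
        rw [Nat.not_even_iff] at hv
        have hlt := ZMod.val_lt (t - i)
        have heq := zmod_eq_add_val i t
        have hv' : (t - i).val = 1 ∨ (t - i).val = 3 ∨ (t - i).val = 5 ∨ (t - i).val = 7 := by
          omega
        rcases hv' with h | h | h | h
        · left; rw [h] at heq; rw [heq]; norm_num
        · right; left; rw [h] at heq; rw [heq]; norm_num
        · right; right; left; rw [h] at heq; rw [heq]; norm_num
        · right; right; right; rw [h] at heq; rw [heq]; norm_num
      have e3 : i - 3 = i + 5 := by
        have h80 : (8 : ZMod 8) = 0 := by decide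
        linear_combination -h80
      have e5 : i - 1 = i + 7 := by
        have h80 : (8 : ZMod 8) = 0 := by decide
        linear_combination -h80
      have ht1mem : t1 ∈ ({i+1, i+3, i+5, i+7} : Finset (ZMod 8)) := by
        rcases hTloc t1 ht1 with h | h | h | h <;> simp [h]
      have ht2mem : t2 ∈ ({i+1, i+3, i+5, i+7} : Finset (ZMod 8)).erase t1 := by
        rw [Finset.mem_erase]
        refine ⟨ht12.symm, ?_⟩
        rcases hTloc t2 ht2 with h | h | h | h <;> simp [h]
      have hBsub2 : B ⊆ (({i+1, i+3, i+5, i+7} : Finset (ZMod 8)).erase t1).erase t2 := by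
        intro b hb
        rw [Finset.mem_erase, Finset.mem_erase]
        refine ⟨fun h => hBT b hb (h ▸ ht2), fun h => hBT b hb (h ▸ ht1), ?_⟩
        rcases hBsub b hb with h | h | h | h
        · simp [h]
        · simp [h]
        · rw [h, e3]; simp
        · rw [h, e5]; simp
      have hc := Finset.card_le_card hBsub2
      rw [Finset.card_erase_of_mem ht2mem, Finset.card_erase_of_mem ht1mem] at hc
      have := card4 (i+1) (i+3) (i+5) (i+7)
      omega
    · have hBsub2 : B ⊆ ({i+1, i+3, i-3, i-1} : Finset (ZMod n)) := by
        intro b hb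
        rcases hBsub b hb with h | h | h | h <;> simp [h]
      have := Finset.card_le_card hBsub2
      have := card4 (i+1) (i+3) (i-3) (i-1)
      omega
  · -- |A| = 2
    obtain ⟨i, j, hij, hAeq⟩ := Finset.card_eq_two.mp hAc
    rw [hAc]
    have hi : i ∈ A := by rw [hAeq]; simp
    have hj : j ∈ A := by rw [hAeq]; simp
    have key : ∀ a : ZMod n, a ∈ A → a + 2 ∈ A → 2 + B.card ≤ n / 2 := by
      intro a ha ha2
      have hBc1 : ∀ b ∈ B, b = a + 1 ∨ b = a + 3 ∨ b = a - 3 ∨ b = a - 1 :=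
        fun b hb => hAB a ha b hb
      have hBc2 : ∀ b ∈ B, b = a + 3 ∨ b = a + 5 ∨ b = a - 1 ∨ b = a + 1 := by
        intro b hb
        rcases hAB (a+2) ha2 b hb with h | h | h | h
        · left; rw [h]; ring
        · right; left; rw [h]; ring
        · right; right; left; rw [h]; ring
        · right; right; right; rw [h]; ring
      have hBT : ∀ b ∈ B, b ∉ T := by
        intro b hb hbT
        have g1 := (hG3 a ha b hb hbT).2
        have g2 := (hG3 (a+2) ha2 b hb hbT).2
        have hn6 := (hG3 a ha b hb hbT).1
        exact hne0 2 (by omega) (by omega) (by push_cast; linear_combination g1 - g2)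
      have hTval : ∀ t ∈ T, ¬ (t - a).val ≤ 2 := hG4 a ha ha2
      rcases (show n = 6 ∨ n = 8 ∨ 10 ≤ n by omega) with h6 | h8 | h10
      · subst h6
        have hTloc : ∀ t ∈ T, t = a + 3 ∨ t = a + 5 := by
          intro t ht
          have hv := hodd a ha t (hTs t ht)
          rw [Nat.not_even_iff] at hv
          have hlt := ZMod.val_lt (t - a)
          have heq := zmod_eq_add_val a t
          have hnle := hTval t ht
          have hv' : (t - a).val = 3 ∨ (t - a).val = 5 := by omega
          rcases hv' with h | h
          · left; rw [h] at heq; rw [heq]; norm_num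
          · right; rw [h] at heq; rw [heq]; norm_num
        have h35 : (a + 3) ∈ T ∧ (a + 5) ∈ T := by
          rcases hTloc t1 ht1 with h1' | h1' <;> rcases hTloc t2 ht2 with h2' | h2'
          · exact absurd (h1'.trans h2'.symm) ht12
          · exact ⟨h1' ▸ ht1, h2' ▸ ht2⟩
          · exact ⟨h2' ▸ ht2, h1' ▸ ht1⟩
          · exact absurd (h1'.trans h2'.symm) ht12
        have e3 : a - 3 = a + 3 := by
          have h60 : (6 : ZMod 6) = 0 := by decide
          linear_combination -h60
        have e5 : a - 1 = a + 5 := by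
          have h60 : (6 : ZMod 6) = 0 := by decide
          linear_combination -h60
        have hBsub : B ⊆ ({a+1} : Finset (ZMod 6)) := by
          intro b hb
          rcases hBc1 b hb with h | h | h | h
          · simp [h]
          · exact absurd (h ▸ h35.1) (hBT b hb)
          · rw [e3] at h; exact absurd (h ▸ h35.1) (hBT b hb)
          · rw [e5] at h; exact absurd (h ▸ h35.2) (hBT b hb)
        have := Finset.card_le_card hBsub
        simp only [Finset.card_singleton] at this
        omega
      · subst h8
        have hTloc : ∀ t ∈ T, t = a + 3 ∨ t = a + 5 ∨ t = a + 7 := by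
          intro t ht
          have hv := hodd a ha t (hTs t ht)
          rw [Nat.not_even_iff] at hv
          have hlt := ZMod.val_lt (t - a)
          have heq := zmod_eq_add_val a t
          have hnle := hTval t ht
          have hv' : (t - a).val = 3 ∨ (t - a).val = 5 ∨ (t - a).val = 7 := by omega
          rcases hv' with h | h | h
          · left; rw [h] at heq; rw [heq]; norm_num
          · right; left; rw [h] at heq; rw [heq]; norm_num
          · right; right; rw [h] at heq; rw [heq]; norm_num
        have e3 : a - 3 = a + 5 := by
          have h80 : (8 : ZMod 8) = 0 := by decide
          linear_combination -h80
        have e5 : a - 1 = a + 7 := by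
          have h80 : (8 : ZMod 8) = 0 := by decide
          linear_combination -h80
        have ht1mem : t1 ∈ ({a+1, a+3, a+5, a+7} : Finset (ZMod 8)) := by
          rcases hTloc t1 ht1 with h | h | h <;> simp [h]
        have ht2mem : t2 ∈ ({a+1, a+3, a+5, a+7} : Finset (ZMod 8)).erase t1 := by
          rw [Finset.mem_erase]
          refine ⟨ht12.symm, ?_⟩
          rcases hTloc t2 ht2 with h | h | h <;> simp [h]
        have hBsub2 : B ⊆ (({a+1, a+3, a+5, a+7} : Finset (ZMod 8)).erase t1).erase t2 := by
          intro b hb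
          rw [Finset.mem_erase, Finset.mem_erase]
          refine ⟨fun h => hBT b hb (h ▸ ht2), fun h => hBT b hb (h ▸ ht1), ?_⟩
          rcases hBc1 b hb with h | h | h | h
          · simp [h]
          · simp [h]
          · rw [h, e3]; simp
          · rw [h, e5]; simp
        have hc := Finset.card_le_card hBsub2
        rw [Finset.card_erase_of_mem ht2mem, Finset.card_erase_of_mem ht1mem] at hc
        have := card4 (a+1) (a+3) (a+5) (a+7)
        omega
      · -- n ≥ 10
        have hBsub : B ⊆ ({a+1, a+3, a-1} : Finset (ZMod n)) := by
          intro b hb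
          rcases hBc1 b hb with h | h | h | h
          · simp [h]
          · simp [h]
          · exfalso
            rcases hBc2 b hb with h' | h' | h' | h'
            · exact hne0 6 (by omega) (by omega) (by push_cast; linear_combination h - h')
            · exact hne0 8 (by omega) (by omega) (by push_cast; linear_combination h - h')
            · exact hne0 2 (by omega) (by omega) (by push_cast; linear_combination h - h')
            · exact hne0 4 (by omega) (by omega) (by push_cast; linear_combination h - h')
          · simp [h]
        have := Finset.card_le_card hBsub
        have := card3 (a+1) (a+3) (a-1)
        omega
    rcases hApair i hi j hj hij with h | h
    · exact key i hi (h ▸ hj)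
    · exact key j hj (h ▸ hi)
  · -- |A| ≥ 3 : contradiction
    exfalso
    obtain ⟨i, hi⟩ := Finset.card_pos.mp (by omega : 0 < A.card)
    have h2c : 1 < (A.erase i).card := by rw [Finset.card_erase_of_mem hi]; omega
    obtain ⟨j, hj', l, hl', hjl⟩ := Finset.one_lt_card.mp h2c
    obtain ⟨hjne, hj⟩ := Finset.mem_erase.mp hj'
    obtain ⟨hlne, hl⟩ := Finset.mem_erase.mp hl'
    have getn6 : ((6:ℕ) : ZMod n) = 0 → n = 6 := by
      intro h
      rw [ZMod.natCast_eq_zero_iff] at h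
      have := Nat.le_of_dvd (by omega) h
      omega
    rcases hApair i hi j hj (Ne.symm hjne) with h1 | h1 <;>
      rcases hApair i hi l hl (Ne.symm hlne) with h2 | h2 <;>
      rcases hApair j hj l hl hjl with h3 | h3
    · exact hjl (h1.trans h2.symm)
    · exact hjl (h1.trans h2.symm)
    · -- j = i+2, i = l+2, l = j+2 : n = 6, hexagon at i
      have h6c : ((6:ℕ) : ZMod n) = 0 := by push_cast; linear_combination -h1 - h2 - h3
      have h6 : n = 6 := getn6 h6c
      push_cast at h6c
      apply hex i h6 hi (h1 ▸ hj)
      have hl4 : i + 4 = l := by linear_combination h2 + h6c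
      rw [hl4]; exact hl
    · -- j = i+2, i = l+2, j = l+2 : 2 = 0
      exact hne0 2 (by omega) (by omega) (by push_cast; linear_combination -h1 - h2 + h3)
    · exact hlne (h3.trans h1.symm)
    · -- i = j+2, l = i+2, j = l+2 : n = 6, hexagon at j
      have h6c : ((6:ℕ) : ZMod n) = 0 := by push_cast; linear_combination -h1 - h2 - h3
      have h6 : n = 6 := getn6 h6c
      push_cast at h6c
      have hj2 : j + 2 ∈ A := by rw [← h1]; exact hi
      apply hex j h6 hj hj2
      have hl4 : j + 4 = l := by linear_combination -h1 - h2
      rw [hl4]; exact hl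
    · exact hjl (by linear_combination h2 - h1)
    · exact hjl (by linear_combination h2 - h1)

end Core2
section Build
variable {V : Type*} {G : SimpleGraph V}

lemma cycle_through_one {a b x : V} (P : G.Walk a b)
    (hP : P.IsPath) (hx : x ∉ P.support) (h1 : G.Adj x a) (h2 : G.Adj b x) (hab : a ≠ b) :
    ∃ cyc : G.Walk x x, cyc.IsCycle ∧ cyc.length = P.length + 2 ∧
      x ∈ cyc.support ∧ ∀ u ∈ P.support, u ∈ cyc.support := by
  refine ⟨SimpleGraph.Walk.cons h1 (P.concat h2), ?_, ?_, ?_, ?_⟩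
  · rw [SimpleGraph.Walk.cons_isCycle_iff]
    constructor
    · rw [SimpleGraph.Walk.isPath_def, SimpleGraph.Walk.support_concat,
        List.nodup_append]
      refine ⟨hP.support_nodup, List.nodup_singleton x, ?_⟩
      intro u hu w hw hu'
      rw [List.mem_singleton] at hw; subst hw
      exact hx (hu' ▸ hu)
    · intro hmem
      rw [SimpleGraph.Walk.edges_concat, List.concat_eq_append, List.mem_append] at hmem
      rcases hmem with hm | hm
      · exact hx (SimpleGraph.Walk.fst_mem_support_of_mem_edges P hm)
      · rw [List.mem_singleton, Sym2.eq_iff] at hm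
        rcases hm with ⟨hm1, hm2⟩ | ⟨hm1, hm2⟩
        · apply hx; rw [hm1]; exact P.end_mem_support
        · exact hab hm2
  · simp [SimpleGraph.Walk.length_concat]
  · simp
  · intro u hu
    rw [SimpleGraph.Walk.support_cons, SimpleGraph.Walk.support_concat]
    simp only [List.mem_cons, List.mem_append]
    right; left; exact hu

lemma cycle_through_two {a b x y : V} (P : G.Walk a b)
    (hP : P.IsPath) (hx : x ∉ P.support) (hy : y ∉ P.support)
    (hxy : G.Adj x y) (hya : G.Adj y a) (hbx : G.Adj b x) :
    ∃ cyc : G.Walk x x, cyc.IsCycle ∧ cyc.length = P.length + 3 ∧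
      x ∈ cyc.support ∧ y ∈ cyc.support ∧ ∀ u ∈ P.support, u ∈ cyc.support := by
  refine ⟨SimpleGraph.Walk.cons hxy (SimpleGraph.Walk.cons hya (P.concat hbx)), ?_, ?_, ?_, ?_, ?_⟩
  · rw [SimpleGraph.Walk.cons_isCycle_iff]
    constructor
    · rw [SimpleGraph.Walk.isPath_def, SimpleGraph.Walk.support_cons,
        SimpleGraph.Walk.support_concat, List.nodup_cons,
        List.nodup_append]
      refine ⟨?_, hP.support_nodup, List.nodup_singleton x, ?_⟩
      · intro hmem
        rw [List.mem_append, List.mem_singleton] at hmem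
        rcases hmem with hm | hm
        · exact hy hm
        · exact G.ne_of_adj hxy hm.symm
      · intro u hu w hw hu'
        rw [List.mem_singleton] at hw; subst hw
        exact hx (hu' ▸ hu)
    · intro hmem
      rw [SimpleGraph.Walk.edges_cons, SimpleGraph.Walk.edges_concat, List.concat_eq_append,
        List.mem_cons, List.mem_append] at hmem
      rcases hmem with hm | hm | hm
      · rw [Sym2.eq_iff] at hm
        rcases hm with ⟨hm1, hm2⟩ | ⟨hm1, hm2⟩
        · exact G.ne_of_adj hxy hm1
        · apply hx; rw [hm1]; exact P.start_mem_support
      · exact hx (SimpleGraph.Walk.fst_mem_support_of_mem_edges P hm)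
      · rw [List.mem_singleton, Sym2.eq_iff] at hm
        rcases hm with ⟨hm1, hm2⟩ | ⟨hm1, hm2⟩
        · apply hx; rw [hm1]; exact P.end_mem_support
        · apply hy; rw [hm2]; exact P.end_mem_support
  · simp [SimpleGraph.Walk.length_concat]
  · simp
  · simp
  · intro u hu
    rw [SimpleGraph.Walk.support_cons, SimpleGraph.Walk.support_cons,
      SimpleGraph.Walk.support_concat]
    simp only [List.mem_cons, List.mem_append]
    right; right; left; exact hu

end Build
/-- Lemma 1(4): for a minimal feasible cycle C of length ≥ 6 and adjacent
vertices x ∈ S, y ∈ Y off C, e({x,y}, C) ≤ |C|/2. -/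
theorem edges_adjacent_pair_to_minimal_cycle {V : Type*} [Fintype V] [DecidableEq V]
    (G : SimpleGraph V) [DecidableRel G.Adj]
    (X Y S : Finset V)
    (hdisj : Disjoint X Y) (hcover : X ∪ Y = Finset.univ)
    (hbip : ∀ u v : V, G.Adj u v → (u ∈ X ∧ v ∈ Y) ∨ (u ∈ Y ∧ v ∈ X))
    (hSX : S ⊆ X)
    (v : V) (c : G.Walk v v) (hc : c.IsCycle)
    (hlen : 6 ≤ c.length)
    (hfeas : 2 ≤ (S ∩ c.support.toFinset).card)
    (hmin : ∀ (u : V) (c' : G.Walk u u), c'.IsCycle →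
      2 ≤ (S ∩ c'.support.toFinset).card → c.length ≤ c'.length)
    (x y : V) (hx : x ∈ S) (hxc : x ∉ c.support)
    (hy : y ∈ Y) (hyc : y ∉ c.support)
    (hxy : G.Adj x y) :
    (c.support.toFinset.filter (fun u => G.Adj x u)).card +
      (c.support.toFinset.filter (fun u => G.Adj y u)).card ≤ c.length / 2 := by
  classical
  set n := c.length with hnn
  haveI : NeZero n := ⟨by omega⟩
  set f : ZMod n → V := fun i => c.getVert i.val with hf
  have hpart : ∀ u : V, u ∈ X ↔ u ∉ Y := by
    intro u
    have hu : u ∈ X ∪ Y := by rw [hcover]; exact Finset.mem_univ u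
    rw [Finset.mem_union] at hu
    constructor
    · intro h hy'; exact Finset.disjoint_left.mp hdisj h hy'
    · intro h; tauto
  have hgv0 : c.getVert 0 = c.getVert n := by
    rw [SimpleGraph.Walk.getVert_zero, hnn, SimpleGraph.Walk.getVert_length]
  have hvlt : ∀ i : ZMod n, i.val < n := fun i => ZMod.val_lt i
  have hfmem : ∀ i : ZMod n, f i ∈ c.support := fun i =>
    SimpleGraph.Walk.mem_support_iff_exists_getVert.mpr
      ⟨i.val, rfl, by rw [← hnn]; exact le_of_lt (hvlt i)⟩
  have hfx : ∀ i : ZMod n, f i ≠ x := fun i h => hxc (h ▸ hfmem i)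
  have hfy : ∀ i : ZMod n, f i ≠ y := fun i h => hyc (h ▸ hfmem i)
  have hinjf : Function.Injective f := by
    intro i j h
    have hval : i.val = j.val :=
      IsCycle.getVert_inj hc (by rw [← hnn]; exact hvlt i) (by rw [← hnn]; exact hvlt j) h
    exact ZMod.val_injective n hval
  have hadjf : ∀ i : ZMod n, G.Adj (f i) (f (i + 1)) := by
    intro i
    have hval : (i + 1).val = (i.val + 1) % n := by
      have h1 : i + 1 = (((i.val + 1 : ℕ)) : ZMod n) := by
        push_cast [zmod_cast_val]
        ring
      rw [h1, ZMod.val_natCast]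
    show G.Adj (c.getVert i.val) (c.getVert (i + 1).val)
    by_cases h : i.val + 1 < n
    · rw [hval, Nat.mod_eq_of_lt h]
      exact c.adj_getVert_succ (by rw [← hnn]; omega)
    · have hv0 : (i + 1).val = 0 := by
        rw [hval, show i.val + 1 = n by have := hvlt i; omega, Nat.mod_self]
      rw [hv0, hgv0]
      have h2 := c.adj_getVert_succ (show n - 1 < c.length by rw [← hnn]; omega)
      rw [show n - 1 + 1 = n by omega] at h2
      have h3 : i.val = n - 1 := by have := hvlt i; omega
      rw [h3]
      exact h2
  have hsupp : ∀ u : V, u ∈ c.support ↔ ∃ i : ZMod n, f i = u := by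
    intro u
    constructor
    · intro hu
      obtain ⟨k, hk, hkle⟩ := SimpleGraph.Walk.mem_support_iff_exists_getVert.mp hu
      refine ⟨(k : ZMod n), ?_⟩
      show c.getVert ((k : ZMod n)).val = u
      rw [ZMod.val_natCast]
      rcases Nat.lt_or_ge k n with h | h
      · rw [Nat.mod_eq_of_lt h]; exact hk
      · have hkn : k = n := by rw [hnn] at *; omega
        rw [hkn, Nat.mod_self, hgv0]
        rw [← hkn]
        exact hk
    · rintro ⟨i, rfl⟩; exact hfmem i
  have himg : c.support.toFinset = Finset.image f Finset.univ := by
    ext u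
    simp only [List.mem_toFinset, Finset.mem_image, Finset.mem_univ, true_and]
    rw [hsupp u]
  -- card translations
  have hxcard : (c.support.toFinset.filter (fun u => G.Adj x u)).card
      = (Finset.univ.filter (fun i : ZMod n => G.Adj x (f i))).card := by
    rw [himg, Finset.filter_image, Finset.card_image_of_injective _ hinjf]
  have hycard : (c.support.toFinset.filter (fun u => G.Adj y u)).card
      = (Finset.univ.filter (fun i : ZMod n => G.Adj y (f i))).card := by
    rw [himg, Finset.filter_image, Finset.card_image_of_injective _ hinjf]
  have hscard : (S ∩ c.support.toFinset).card
      = (Finset.univ.filter (fun i : ZMod n => f i ∈ S)).card := by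
    have h1 : S ∩ c.support.toFinset = c.support.toFinset.filter (fun u => u ∈ S) := by
      ext u
      simp only [Finset.mem_inter, Finset.mem_filter, and_comm]
    rw [h1, himg, Finset.filter_image, Finset.card_image_of_injective _ hinjf]
  -- sides
  set SX : ZMod n → Prop := fun i => f i ∈ X with hSXdef
  have halt : ∀ i : ZMod n, SX (i + 1) ↔ ¬ SX i := by
    intro i
    rcases hbip _ _ (hadjf i) with ⟨h1, h2⟩ | ⟨h1, h2⟩
    · have hnx : ¬ SX (i + 1) := fun hX => ((hpart _).mp hX) h2
      exact ⟨fun h => absurd h hnx, fun h => (h h1).elim⟩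
    · exact ⟨fun _ => fun hX => (hpart _).mp hX h1, fun _ => h2⟩
  have hxX : x ∈ X := hSX hx
  set A : Finset (ZMod n) := Finset.univ.filter (fun i => G.Adj x (f i)) with hAdef
  set B : Finset (ZMod n) := Finset.univ.filter (fun i => G.Adj y (f i)) with hBdef
  set T : Finset (ZMod n) := Finset.univ.filter (fun i => f i ∈ S) with hTdef
  have hAadj : ∀ i ∈ A, G.Adj x (f i) := fun i hi => (Finset.mem_filter.mp hi).2
  have hBadj : ∀ i ∈ B, G.Adj y (f i) := fun i hi => (Finset.mem_filter.mp hi).2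
  have hTS : ∀ i ∈ T, f i ∈ S := fun i hi => (Finset.mem_filter.mp hi).2
  have hA : ∀ i ∈ A, ¬ SX i := by
    intro i hi
    rcases hbip x (f i) (hAadj i hi) with ⟨_, h2⟩ | ⟨h1, _⟩
    · exact fun hX => (hpart _).mp hX h2
    · exact ((hpart x).mp hxX h1).elim
  have hB : ∀ i ∈ B, SX i := by
    intro i hi
    rcases hbip y (f i) (hBadj i hi) with ⟨h1, _⟩ | ⟨_, h2⟩
    · exact ((hpart y).mp h1 hy).elim
    · exact h2
  have hT : ∀ i ∈ T, SX i := fun i hi => hSX (hTS i hi)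
  have hTcard : 2 ≤ T.card := by rw [hTdef, ← hscard]; exact hfeas
  -- arc walks
  have hWk : ∀ (i : ZMod n) (m : ℕ), m < n → ∃ P : G.Walk (f i) (f (i + (m : ℕ))),
      P.IsPath ∧ P.length = m ∧ ∀ u : V, (u ∈ P.support ↔ ∃ r ≤ m, f (i + (r : ℕ)) = u) := by
    intro i m hm
    set F : ℕ → V := fun r => f ((r : ℕ) : ZMod n) with hFdef
    have hFr : ∀ (r : ℕ), F (i.val + r) = f (i + (r : ℕ)) := by
      intro r
      rw [hFdef]
      congr 1
      push_cast [zmod_cast_val]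
      ring
    have hFadj : ∀ r, G.Adj (F r) (F (r + 1)) := by
      intro r
      have h1 := hadjf ((r : ℕ) : ZMod n)
      have h2 : (((r+1) : ℕ) : ZMod n) = ((r : ℕ) : ZMod n) + 1 := by push_cast; ring
      rw [hFdef]
      simpa [h2] using h1
    have hFi : F i.val = f i := by
      rw [hFdef]
      simp [zmod_cast_val]
    have hFim : F (i.val + m) = f (i + (m : ℕ)) := hFr m
    refine ⟨(arcWalk G F hFadj i.val m).copy hFi hFim, ?_, ?_, ?_⟩
    · rw [SimpleGraph.Walk.isPath_def, SimpleGraph.Walk.support_copy, arcWalk_support]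
      apply List.Nodup.map_on ?_ List.nodup_range
      intro r1 h1 r2 h2 heq
      rw [List.mem_range] at h1 h2
      rw [hFr r1, hFr r2] at heq
      have hc2 : ((r1 : ℕ) : ZMod n) = ((r2 : ℕ) : ZMod n) := by
        have h3 := hinjf heq
        exact add_left_cancel h3
      have h4 := congrArg ZMod.val hc2
      rw [ZMod.val_natCast, ZMod.val_natCast, Nat.mod_eq_of_lt (by omega),
        Nat.mod_eq_of_lt (by omega)] at h4
      exact h4
    · simp [arcWalk_length]
    · intro u
      rw [SimpleGraph.Walk.support_copy, mem_arcWalk_support]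
      constructor
      · rintro ⟨r, hr1, hr2⟩
        exact ⟨r, hr1, by rw [← hFr r]; exact hr2⟩
      · rintro ⟨r, hr1, hr2⟩
        exact ⟨r, hr1, by rw [hFr r]; exact hr2⟩
  -- the three minimality facts
  have hP3g : ∀ i ∈ A, ∀ j ∈ A, i ≠ j → ∀ t ∈ T,
      (t - i).val ≤ (j - i).val → n ≤ (j - i).val + 2 := by
    intro i hiA j hjA hij t htT hle
    have hm : (j - i).val < n := ZMod.val_lt _
    obtain ⟨P, hPp, hPl, hPs⟩ := hWk i ((j - i).val) hm
    have hend : f (i + (((j - i).val : ℕ) : ZMod n)) = f j := by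
      congr 1
      rw [zmod_cast_val]
      ring
    have hxP : x ∉ (P.copy rfl hend).support := by
      rw [SimpleGraph.Walk.support_copy]
      intro hmem
      obtain ⟨r, _, hr⟩ := (hPs x).mp hmem
      exact hfx _ hr
    have hne : f i ≠ f j := fun h => hij (hinjf h)
    obtain ⟨cyc, hcyc, hclen, hcx, hcsub⟩ := cycle_through_one (P.copy rfl hend)
      (by rw [SimpleGraph.Walk.isPath_copy]; exact hPp) hxP (hAadj i hiA)
      (hAadj j hjA).symm hne
    have hft : f t ∈ cyc.support := by
      apply hcsub
      rw [SimpleGraph.Walk.support_copy]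
      refine (hPs (f t)).mpr ⟨(t - i).val, hle, ?_⟩
      congr 1
      rw [zmod_cast_val]
      ring
    have hpair : ({x, f t} : Finset V) ⊆ S ∩ cyc.support.toFinset := by
      intro u hu
      rw [Finset.mem_insert, Finset.mem_singleton] at hu
      rw [Finset.mem_inter, List.mem_toFinset]
      rcases hu with rfl | rfl
      · exact ⟨hx, hcx⟩
      · exact ⟨hTS t htT, hft⟩
    have hfc : 2 ≤ (S ∩ cyc.support.toFinset).card := by
      have h2 : ({x, f t} : Finset V).card = 2 := Finset.card_pair (Ne.symm (hfx t))
      exact h2 ▸ Finset.card_le_card hpair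
    have hmle := hmin x cyc hcyc hfc
    rw [hclen, SimpleGraph.Walk.length_copy, hPl] at hmle
    omega
  have hP5g : ∀ i ∈ A, ∀ j ∈ B, ∀ t ∈ T,
      (t - j).val ≤ (i - j).val → n ≤ (i - j).val + 3 := by
    intro i hiA j hjB t htT hle
    have hm : (i - j).val < n := ZMod.val_lt _
    obtain ⟨P, hPp, hPl, hPs⟩ := hWk j ((i - j).val) hm
    have hend : f (j + (((i - j).val : ℕ) : ZMod n)) = f i := by
      congr 1
      rw [zmod_cast_val]
      ring
    have hxP : x ∉ (P.copy rfl hend).support := by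
      rw [SimpleGraph.Walk.support_copy]
      intro hmem
      obtain ⟨r, _, hr⟩ := (hPs x).mp hmem
      exact hfx _ hr
    have hyP : y ∉ (P.copy rfl hend).support := by
      rw [SimpleGraph.Walk.support_copy]
      intro hmem
      obtain ⟨r, _, hr⟩ := (hPs y).mp hmem
      exact hfy _ hr
    obtain ⟨cyc, hcyc, hclen, hcx, hcy, hcsub⟩ := cycle_through_two (P.copy rfl hend)
      (by rw [SimpleGraph.Walk.isPath_copy]; exact hPp) hxP hyP hxy (hBadj j hjB)
      (hAadj i hiA).symm
    have hft : f t ∈ cyc.support := by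
      apply hcsub
      rw [SimpleGraph.Walk.support_copy]
      refine (hPs (f t)).mpr ⟨(t - j).val, hle, ?_⟩
      congr 1
      rw [zmod_cast_val]
      ring
    have hpair : ({x, f t} : Finset V) ⊆ S ∩ cyc.support.toFinset := by
      intro u hu
      rw [Finset.mem_insert, Finset.mem_singleton] at hu
      rw [Finset.mem_inter, List.mem_toFinset]
      rcases hu with rfl | rfl
      · exact ⟨hx, hcx⟩
      · exact ⟨hTS t htT, hft⟩
    have hfc : 2 ≤ (S ∩ cyc.support.toFinset).card := by
      have h2 : ({x, f t} : Finset V).card = 2 := Finset.card_pair (Ne.symm (hfx t))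
      exact h2 ▸ Finset.card_le_card hpair
    have hmle := hmin x cyc hcyc hfc
    rw [hclen, SimpleGraph.Walk.length_copy, hPl] at hmle
    omega
  have hP5'g : ∀ i ∈ A, ∀ j ∈ B, ∀ t ∈ T,
      (t - i).val ≤ (j - i).val → n ≤ (j - i).val + 3 := by
    intro i hiA j hjB t htT hle
    have hm : (j - i).val < n := ZMod.val_lt _
    obtain ⟨P, hPp, hPl, hPs⟩ := hWk i ((j - i).val) hm
    have hend : f (i + (((j - i).val : ℕ) : ZMod n)) = f j := by
      congr 1
      rw [zmod_cast_val]
      ring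
    have hxP : x ∉ (P.copy rfl hend).support := by
      rw [SimpleGraph.Walk.support_copy]
      intro hmem
      obtain ⟨r, _, hr⟩ := (hPs x).mp hmem
      exact hfx _ hr
    have hyP : y ∉ (P.copy rfl hend).support := by
      rw [SimpleGraph.Walk.support_copy]
      intro hmem
      obtain ⟨r, _, hr⟩ := (hPs y).mp hmem
      exact hfy _ hr
    obtain ⟨cyc, hcyc, hclen, hcy, hcx, hcsub⟩ := cycle_through_two (P.copy rfl hend)
      (by rw [SimpleGraph.Walk.isPath_copy]; exact hPp) hyP hxP hxy.symm (hAadj i hiA)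
      (hBadj j hjB).symm
    have hft : f t ∈ cyc.support := by
      apply hcsub
      rw [SimpleGraph.Walk.support_copy]
      refine (hPs (f t)).mpr ⟨(t - i).val, hle, ?_⟩
      congr 1
      rw [zmod_cast_val]
      ring
    have hpair : ({x, f t} : Finset V) ⊆ S ∩ cyc.support.toFinset := by
      intro u hu
      rw [Finset.mem_insert, Finset.mem_singleton] at hu
      rw [Finset.mem_inter, List.mem_toFinset]
      rcases hu with rfl | rfl
      · exact ⟨hx, hcx⟩
      · exact ⟨hTS t htT, hft⟩
    have hfc : 2 ≤ (S ∩ cyc.support.toFinset).card := by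
      have h2 : ({x, f t} : Finset V).card = 2 := Finset.card_pair (Ne.symm (hfx t))
      exact h2 ▸ Finset.card_le_card hpair
    have hmle := hmin y cyc hcyc hfc
    rw [hclen, SimpleGraph.Walk.length_copy, hPl] at hmle
    omega
  rw [hxcard, hycard]
  exact core_lemma hlen SX A B T halt hA hB hT hTcard hP3g hP5g hP5'g
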